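/- Let n ≥ 1, e₀, e₁, …, e_n ∈ ℝ^N unit vectors with δ := min_i(e_i·e₀) > 0, τ_i ∈ ℝ, c > 0, and Γ_t := {z : min_{1≤i≤n}(z·e_i − c t + τ_i) = 0}. Then Γ_t is nonempty for every t, and dist(Γ_t, Γ_s) ≤ (c/δ)·|t − s| for all t, s ∈ ℝ. -/

import Mathlib

lemma inf'_sub_const {ι : Type*} {s : Finset ι} (hs : s.Nonempty) (f : ι → ℝ) (k : ℝ) :
    s.inf' hs (fun i => f i - k) = s.inf' hs f - k := by
  apply le_antisymm
  · obtain ⟨j, hj, hje⟩ := Finset.exists_mem_eq_inf' hs f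
    rw [hje]
    exact Finset.inf'_le _ hj
  · obtain ⟨j, hj, hje⟩ := Finset.exists_mem_eq_inf' hs (fun i => f i - k)
    rw [hje]
    have h2 : s.inf' hs f ≤ f j := Finset.inf'_le f hj
    linarith

/-- Upper bound on the distance of moving interfaces: each `Γ_t` is nonempty and
`dist(Γ_t, Γ_s) ≤ (c/δ)|t-s|`, witnessed by a pair of points. -/
theorem stmt15 (N n : ℕ) (hn : 0 < n) (hne : (Finset.univ : Finset (Fin n)).Nonempty)
    (e₀ : EuclideanSpace ℝ (Fin N)) (he₀ : ‖e₀‖ = 1)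
    (e : Fin n → EuclideanSpace ℝ (Fin N)) (he : ∀ i, ‖e i‖ = 1)
    (hδ : 0 < Finset.univ.inf' hne (fun i => (inner ℝ (e i) e₀ : ℝ)))
    (τ : Fin n → ℝ) (c : ℝ) (hc : 0 < c) :
    (∀ t : ℝ, ({z : EuclideanSpace ℝ (Fin N) |
        Finset.univ.inf' hne (fun i => (inner ℝ z (e i) : ℝ) - c * t + τ i) = 0}).Nonempty) ∧
    ∀ t s : ℝ,
      ∃ z ∈ {z : EuclideanSpace ℝ (Fin N) |
          Finset.univ.inf' hne (fun i => (inner ℝ z (e i) : ℝ) - c * t + τ i) = 0},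
      ∃ y ∈ {z : EuclideanSpace ℝ (Fin N) |
          Finset.univ.inf' hne (fun i => (inner ℝ z (e i) : ℝ) - c * s + τ i) = 0},
        dist z y ≤ (c / Finset.univ.inf' hne (fun i => (inner ℝ (e i) e₀ : ℝ))) * |t - s| := by
  set δ := Finset.univ.inf' hne (fun i => (inner ℝ (e i) e₀ : ℝ)) with hδdef
  have ha : ∀ i, δ ≤ (inner ℝ e₀ (e i) : ℝ) := fun i => by
    rw [real_inner_comm]; exact Finset.inf'_le _ (Finset.mem_univ i)
  set h : ℝ → ℝ := fun ρ => Finset.univ.inf' hne (fun i => ρ * (inner ℝ e₀ (e i) : ℝ) + τ i)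
    with hh
  have hcont : Continuous h := by
    apply Continuous.finset_inf'_apply
    intro i _
    exact (continuous_id.mul continuous_const).add continuous_const
  -- monotone growth
  have hmono : ∀ ρ σ : ℝ, ρ ≤ σ → h ρ + δ * (σ - ρ) ≤ h σ := by
    intro ρ σ hρσ
    apply Finset.le_inf'
    intro i _
    have h1 : h ρ ≤ ρ * (inner ℝ e₀ (e i) : ℝ) + τ i := Finset.inf'_le _ (Finset.mem_univ i)
    have h2 : δ * (σ - ρ) ≤ (inner ℝ e₀ (e i) : ℝ) * (σ - ρ) :=
      mul_le_mul_of_nonneg_right (ha i) (by linarith)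
    nlinarith
  -- surjectivity of h
  have hsurj : ∀ v : ℝ, ∃ ρ : ℝ, h ρ = v := by
    intro v
    obtain ⟨i0, _, hi0⟩ := Finset.exists_mem_eq_inf' hne (fun i => (inner ℝ (e i) e₀ : ℝ))
    have hi0' : (inner ℝ e₀ (e i0) : ℝ) = δ := by rw [real_inner_comm, ← hi0, hδdef]
    obtain ⟨j0, _, hj0⟩ := Finset.exists_mem_eq_inf' hne τ
    set ρ₁ : ℝ := min 0 ((v - τ i0) / δ) with hρ₁
    set ρ₂ : ℝ := max 0 ((v - Finset.univ.inf' hne τ) / δ) with hρ₂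
    have h1 : h ρ₁ ≤ v := by
      have := Finset.inf'_le (fun i => ρ₁ * (inner ℝ e₀ (e i) : ℝ) + τ i) (Finset.mem_univ i0)
      rw [hi0'] at this
      have h2 : ρ₁ ≤ (v - τ i0) / δ := min_le_right _ _
      have h3 : ρ₁ * δ ≤ v - τ i0 := (le_div_iff₀ hδ).mp h2
      calc h ρ₁ ≤ ρ₁ * δ + τ i0 := this
        _ ≤ v := by linarith
    have h2 : v ≤ h ρ₂ := by
      apply Finset.le_inf'
      intro i _
      have hτ : Finset.univ.inf' hne τ ≤ τ i := Finset.inf'_le _ (Finset.mem_univ i)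
      have hρ₂0 : 0 ≤ ρ₂ := le_max_left _ _
      have h4 : (v - Finset.univ.inf' hne τ) / δ ≤ ρ₂ := le_max_right _ _
      have h5 : v - Finset.univ.inf' hne τ ≤ ρ₂ * δ := (div_le_iff₀ hδ).mp h4
      have h6 : ρ₂ * δ ≤ ρ₂ * (inner ℝ e₀ (e i) : ℝ) :=
        mul_le_mul_of_nonneg_left (ha i) hρ₂0
      linarith
    have h12 : ρ₁ ≤ ρ₂ := le_trans (min_le_left _ _) (le_max_left _ _)
    have := intermediate_value_Icc h12 hcont.continuousOn
    obtain ⟨ρ, _, hρ⟩ := this ⟨h1, h2⟩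
    exact ⟨ρ, hρ⟩
  choose ρ hρ using hsurj
  -- membership lemma
  have hmem : ∀ t : ℝ, (ρ (c * t)) • e₀ ∈ {z : EuclideanSpace ℝ (Fin N) |
      Finset.univ.inf' hne (fun i => (inner ℝ z (e i) : ℝ) - c * t + τ i) = 0} := by
    intro t
    show Finset.univ.inf' hne
      (fun i => (inner ℝ ((ρ (c * t)) • e₀) (e i) : ℝ) - c * t + τ i) = 0
    have : (fun i => (inner ℝ ((ρ (c * t)) • e₀) (e i) : ℝ) - c * t + τ i)
        = fun i => (ρ (c * t) * (inner ℝ e₀ (e i) : ℝ) + τ i) - c * t := by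
      funext i
      rw [real_inner_smul_left]
      ring
    rw [this, inf'_sub_const]
    show h (ρ (c * t)) - c * t = 0
    rw [hρ]
    ring
  refine ⟨fun t => ⟨_, hmem t⟩, fun t s => ⟨_, hmem t, _, hmem s, ?_⟩⟩
  have hd : dist ((ρ (c * t)) • e₀) ((ρ (c * s)) • e₀) = |ρ (c * t) - ρ (c * s)| := by
    rw [dist_eq_norm, ← sub_smul, norm_smul, he₀, Real.norm_eq_abs, mul_one]
  rw [hd]
  have key : ∀ a b : ℝ, ρ a ≤ ρ b → δ * (ρ b - ρ a) ≤ b - a := by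
    intro a b hab
    have := hmono (ρ a) (ρ b) hab
    rw [hρ, hρ] at this
    linarith
  rw [div_mul_eq_mul_div, le_div_iff₀ hδ]
  rcases le_total (ρ (c * t)) (ρ (c * s)) with hle | hle
  · have := key _ _ hle
    have habs : |ρ (c * t) - ρ (c * s)| = ρ (c * s) - ρ (c * t) := by
      rw [abs_sub_comm]; exact abs_of_nonneg (by linarith)
    have h2 : c * s - c * t ≤ c * |t - s| := by
      have : s - t ≤ |t - s| := by rw [abs_sub_comm]; exact le_abs_self _
      nlinarith
    rw [habs]
    nlinarith
  · have := key _ _ hle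
    have habs : |ρ (c * t) - ρ (c * s)| = ρ (c * t) - ρ (c * s) :=
      abs_of_nonneg (by linarith)
    have h2 : c * t - c * s ≤ c * |t - s| := by
      have : t - s ≤ |t - s| := le_abs_self _
      nlinarith
    rw [habs]
    nlinarith
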